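/- If (X,d) is a compact ultrametric space with at least two points, then there exists a homeomorphism λ : [0,∞) → [0,∞) such that d' = λ∘d is an ultrametric on X inducing the same topology as d, every nonzero value of d' belongs to {e^{-i} : i = 0, 1, 2, …}, and the value 1 = e^0 is attained by d' (so (X,d') has diameter 1). -/

import Mathlib

open Set

open Classical in
noncomputable def nxt (S : Set ℝ) (c : ℝ) : ℝ :=
  if (S ∩ Set.Iio c).Nonempty then sSup (S ∩ Set.Iio c) else c / 2

noncomputable def rseq (S : Set ℝ) (r0 : ℝ) : ℕ → ℝ
  | 0 => r0
  | i+1 => nxt S (rseq S r0 i)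

section nxt

variable {S : Set ℝ} (hpos : ∀ s ∈ S, 0 < s) (hfin : ∀ ε, 0 < ε → (S ∩ Set.Ici ε).Finite)

include hpos hfin in
theorem isGreatest_inter {c : ℝ} (h : (S ∩ Set.Iio c).Nonempty) :
    IsGreatest (S ∩ Set.Iio c) (sSup (S ∩ Set.Iio c)) := by
  obtain ⟨s0, hs0S, hs0c⟩ := h
  have hFfin : (S ∩ Set.Ico s0 c).Finite := by
    apply (hfin s0 (hpos s0 hs0S)).subset
    rintro x ⟨hxS, hx1, _⟩; exact ⟨hxS, hx1⟩
  have hFne : (S ∩ Set.Ico s0 c).Nonempty := ⟨s0, hs0S, le_refl _, hs0c⟩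
  obtain ⟨m, hmF, hm⟩ := Set.exists_max_image _ id hFfin hFne
  have hG : IsGreatest (S ∩ Set.Iio c) m := by
    constructor
    · exact ⟨hmF.1, hmF.2.2⟩
    · rintro x ⟨hxS, hxc⟩
      rcases le_or_gt s0 x with h1 | h1
      · exact hm x ⟨hxS, h1, hxc⟩
      · exact le_trans h1.le (hm s0 ⟨hs0S, le_refl _, hs0c⟩)
  rwa [hG.csSup_eq]

include hpos hfin in
theorem nxt_mem {c : ℝ} (h : (S ∩ Set.Iio c).Nonempty) :
    nxt S c ∈ S ∧ nxt S c < c ∧ ∀ s ∈ S, s < c → s ≤ nxt S c := by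
  have hG := isGreatest_inter hpos hfin h
  rw [nxt, if_pos h]
  exact ⟨hG.1.1, hG.1.2, fun s hs hsc => hG.2 ⟨hs, hsc⟩⟩

include hpos hfin in
theorem nxt_lt_self {c : ℝ} (hc : 0 < c) : nxt S c < c ∧ 0 < nxt S c := by
  by_cases h : (S ∩ Set.Iio c).Nonempty
  · obtain ⟨h1, h2, _⟩ := nxt_mem hpos hfin h
    exact ⟨h2, hpos _ h1⟩
  · rw [nxt, if_neg h]; constructor <;> linarith

variable {r0 : ℝ} (hr0S : r0 ∈ S)

include hpos hfin hr0S in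
theorem rseq_pos_anti : ∀ i, 0 < rseq S r0 i ∧ rseq S r0 (i+1) < rseq S r0 i := by
  intro i
  induction i with
  | zero =>
    refine ⟨hpos _ hr0S, ?_⟩
    exact (nxt_lt_self hpos hfin (hpos _ hr0S)).1
  | succ n ih =>
    have h1 : 0 < rseq S r0 (n+1) := by
      have := nxt_lt_self hpos hfin ih.1
      exact this.2
    exact ⟨h1, (nxt_lt_self hpos hfin h1).1⟩

include hpos hfin hr0S in
theorem rseq_strictAnti : StrictAnti (rseq S r0) :=
  strictAnti_nat_of_succ_lt fun n => (rseq_pos_anti hpos hfin hr0S n).2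

include hpos hfin hr0S in
theorem rseq_small : ∀ t, 0 < t → ∃ j, rseq S r0 j < t := by
  intro t ht
  by_contra hcon
  push_neg at hcon
  by_cases hall : ∀ i, (S ∩ Set.Iio (rseq S r0 i)).Nonempty
  · have hmem : ∀ i, rseq S r0 i ∈ S := by
      intro i
      induction i with
      | zero => exact hr0S
      | succ n _ => exact (nxt_mem hpos hfin (hall n)).1
    have hinf : (S ∩ Set.Ici t).Infinite := by
      apply Set.infinite_of_injective_forall_mem
        (f := rseq S r0) (rseq_strictAnti hpos hfin hr0S).injective
      exact fun i => ⟨hmem i, hcon i⟩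
    exact hinf (hfin t ht)
  · push_neg at hall
    obtain ⟨i, hi⟩ := hall
    have hpow : ∀ k, rseq S r0 (i + k) ≤ rseq S r0 i / 2 ^ k ∧
        S ∩ Set.Iio (rseq S r0 (i + k)) = ∅ := by
      intro k
      induction k with
      | zero => simpa using hi
      | succ n ihn =>
        have hne : ¬ (S ∩ Set.Iio (rseq S r0 (i + n))).Nonempty := by
          rw [ihn.2]; exact Set.not_nonempty_empty
        have heq : rseq S r0 (i + (n+1)) = rseq S r0 (i + n) / 2 := by
          show nxt S (rseq S r0 (i+n)) = _
          rw [nxt, if_neg hne]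
        constructor
        · rw [heq, pow_succ, ← div_div]
          linarith [ihn.1]
        · apply Set.eq_empty_of_subset_empty
          rw [← ihn.2]
          intro x hx
          refine ⟨hx.1, Set.mem_Iio.mpr (lt_trans (Set.mem_Iio.mp hx.2) ?_)⟩
          rw [heq]
          have := (rseq_pos_anti hpos hfin hr0S (i+n)).1
          linarith
    have hipos := (rseq_pos_anti hpos hfin hr0S i).1
    obtain ⟨k, hk⟩ := pow_unbounded_of_one_lt (rseq S r0 i / t) (y := (2:ℝ)) one_lt_two
    have : rseq S r0 (i + k) < t := by
      have h1 := (hpow k).1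
      have h2 : (0:ℝ) < 2 ^ k := by positivity
      rw [div_lt_iff₀ ht] at hk
      calc rseq S r0 (i + k) ≤ rseq S r0 i / 2 ^ k := h1
        _ < t := by rw [div_lt_iff₀ h2]; linarith
    exact absurd (hcon (i + k)) (not_le.mpr this)

include hpos hfin hr0S in
theorem rseq_mem_of_mem (hub : ∀ s ∈ S, s ≤ r0) : ∀ s ∈ S, ∃ i, rseq S r0 i = s := by
  intro s hs
  have hspos := hpos s hs
  have hex : ∃ j, rseq S r0 j ≤ s := by
    obtain ⟨j, hj⟩ := rseq_small hpos hfin hr0S s hspos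
    exact ⟨j, hj.le⟩
  have hfind := Nat.find_spec hex
  match hm : Nat.find hex with
  | 0 =>
    rw [hm] at hfind
    exact ⟨0, le_antisymm hfind (hub s hs)⟩
  | m+1 =>
    rw [hm] at hfind
    have hmlt : ¬ rseq S r0 m ≤ s := Nat.find_min hex (by omega)
    push_neg at hmlt
    have h1 : s ≤ rseq S r0 (m+1) :=
      (nxt_mem hpos hfin ⟨s, hs, hmlt⟩).2.2 s hs hmlt
    exact ⟨m+1, le_antisymm hfind h1⟩

end nxt
noncomputable def ee (i : ℕ) : ℝ := Real.exp (-(i : ℝ))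

theorem ee_pos (i : ℕ) : 0 < ee i := Real.exp_pos _

theorem ee_zero : ee 0 = 1 := by simp [ee]

theorem ee_succ_lt (i : ℕ) : ee (i + 1) < ee i := by
  apply Real.exp_lt_exp.2
  push_cast
  linarith

theorem ee_anti : ∀ {i j : ℕ}, i ≤ j → ee j ≤ ee i := by
  intro i j hij
  apply Real.exp_le_exp.2
  push_cast
  exact neg_le_neg (by exact_mod_cast hij)

noncomputable def pc (r : ℕ → ℝ) (m : ℕ) (t : ℝ) : ℝ :=
  ee (m + 1) + (ee m - ee (m + 1)) / (r m - r (m + 1)) * (t - r (m + 1))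

open Classical in
noncomputable def ell (r : ℕ → ℝ) (t : ℝ) : ℝ :=
  if t ≤ 0 then t
  else if r 0 ≤ t then t - r 0 + 1
  else if h : ∃ j, r j < t then pc r (Nat.find h - 1) t
  else 0

section ell

variable {r : ℕ → ℝ} (hrpos : ∀ i, 0 < r i) (hranti : ∀ i, r (i + 1) < r i)

include hranti in
theorem pc_slope_pos (m : ℕ) : 0 < (ee m - ee (m + 1)) / (r m - r (m + 1)) :=
  div_pos (by linarith [ee_succ_lt m]) (by linarith [hranti m])

include hranti in
theorem pc_strictMono {m : ℕ} {s t : ℝ} (hst : s < t) : pc r m s < pc r m t := by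
  have h := pc_slope_pos hranti (r := r) m
  unfold pc
  have := mul_lt_mul_of_pos_left (sub_lt_sub_right hst (r (m + 1))) h
  linarith

theorem pc_bot (m : ℕ) : pc r m (r (m + 1)) = ee (m + 1) := by simp [pc]

include hranti in
theorem pc_top (m : ℕ) : pc r m (r m) = ee m := by
  have hne : r m - r (m + 1) ≠ 0 := by linarith [hranti m]
  unfold pc; rw [div_mul_cancel₀ _ hne]; ring

include hranti in
theorem pc_bounds {m : ℕ} {t : ℝ} (h1 : r (m + 1) < t) (h2 : t ≤ r m) :
    ee (m + 1) < pc r m t ∧ pc r m t ≤ ee m := by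
  constructor
  · have := pc_strictMono hranti (r := r) (m := m) h1
    rwa [pc_bot] at this
  · rcases eq_or_lt_of_le h2 with h | h
    · rw [h, pc_top hranti]
    · have := pc_strictMono hranti (r := r) (m := m) h
      rw [pc_top hranti] at this
      exact this.le

include hrpos hranti in
theorem ell_eq_piece {m : ℕ} {t : ℝ} (h1 : r (m + 1) < t) (h2 : t ≤ r m) :
    ell r t = pc r m t := by
  have htpos : 0 < t := lt_trans (hrpos (m + 1)) h1
  have hanti : StrictAnti r := strictAnti_nat_of_succ_lt hranti
  rw [ell, if_neg (not_le.mpr htpos)]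
  by_cases hr0 : r 0 ≤ t
  · -- then t = r 0 and m = 0
    have hm0 : m = 0 := by
      by_contra hm
      have h1' : 1 ≤ m := Nat.one_le_iff_ne_zero.mpr hm
      have : r m ≤ r 1 := hanti.antitone h1'
      have : r 1 < r 0 := hranti 0
      linarith [le_trans h2 (hanti.antitone (Nat.zero_le m))]
    subst hm0
    have ht0 : t = r 0 := le_antisymm h2 hr0
    rw [if_pos hr0, ht0, pc_top hranti, ee_zero]
    ring
  · rw [if_neg hr0]
    have hex : ∃ j, r j < t := ⟨m + 1, h1⟩
    rw [dif_pos hex]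
    have hfind : Nat.find hex = m + 1 := by
      rw [Nat.find_eq_iff]
      refine ⟨h1, fun j hj => not_lt.mpr ?_⟩
      exact le_trans h2 (hanti.antitone (by omega))
    rw [hfind]
    norm_num

include hrpos in
theorem exists_piece_index (hrsmall : ∀ t, 0 < t → ∃ j, r j < t) {t : ℝ} (ht : 0 < t)
    (htop : t ≤ r 0) : ∃ m, r (m + 1) < t ∧ t ≤ r m := by
  have hex := hrsmall t ht
  have hfind := Nat.find_spec hex
  match hm : Nat.find hex with
  | 0 =>
    rw [hm] at hfind
    exact absurd htop (not_le.mpr hfind)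
  | m + 1 =>
    rw [hm] at hfind
    refine ⟨m, hfind, ?_⟩
    have := Nat.find_min hex (m := m) (by omega)
    linarith [not_lt.mp this]

include hrpos hranti in
theorem ell_mem (hrsmall : ∀ t, 0 < t → ∃ j, r j < t) {t : ℝ} (ht : 0 < t) (htop : t ≤ r 0) :
    ∃ m, r (m + 1) < t ∧ t ≤ r m ∧ ee (m + 1) < ell r t ∧ ell r t ≤ ee m := by
  obtain ⟨m, h1, h2⟩ := exists_piece_index hrpos hrsmall ht htop
  rw [ell_eq_piece hrpos hranti h1 h2]
  obtain ⟨b1, b2⟩ := pc_bounds hranti h1 h2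
  exact ⟨m, h1, h2, b1, b2⟩

theorem ell_nonpos {t : ℝ} (ht : t ≤ 0) : ell r t = t := by rw [ell, if_pos ht]

include hrpos in
theorem ell_ge_top {t : ℝ} (ht : r 0 ≤ t) : ell r t = t - r 0 + 1 := by
  rw [ell, if_neg (by linarith [hrpos 0]), if_pos ht]

include hrpos hranti in
theorem ell_pos (hrsmall : ∀ t, 0 < t → ∃ j, r j < t) {t : ℝ} (ht : 0 < t) : 0 < ell r t := by
  rcases le_or_gt (r 0) t with h | h
  · rw [ell_ge_top hrpos h]; linarith
  · obtain ⟨m, _, _, hb, _⟩ := ell_mem hrpos hranti hrsmall ht h.le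
    linarith [ee_pos (m + 1)]

include hrpos hranti in
theorem ell_lt_of_lt (hrsmall : ∀ t, 0 < t → ∃ j, r j < t) {s t : ℝ} (hs : 0 < s) (hst : s < t)
    (ht : t ≤ r 0) : ell r s < ell r t := by
  obtain ⟨ms, hs1, hs2, hs3, hs4⟩ := ell_mem hrpos hranti hrsmall hs (le_of_lt (lt_of_lt_of_le hst ht))
  obtain ⟨mt, ht1, ht2, ht3, ht4⟩ := ell_mem hrpos hranti hrsmall (lt_trans hs hst) ht
  have hanti : StrictAnti r := strictAnti_nat_of_succ_lt hranti
  rcases eq_or_ne ms mt with h | h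
  · subst h
    rw [ell_eq_piece hrpos hranti hs1 hs2, ell_eq_piece hrpos hranti ht1 ht2]
    exact pc_strictMono hranti hst
  · have hlt : mt < ms := by
      by_contra hc
      have : ms < mt := by omega
      have : r mt ≤ r (ms + 1) := hanti.antitone (by omega)
      linarith
    calc ell r s ≤ ee ms := hs4
      _ ≤ ee (mt + 1) := ee_anti (by omega)
      _ < ell r t := ht3

include hrpos in
theorem ell_one : ell r (r 0) = 1 := by
  rw [ell_ge_top hrpos (le_refl _)]; ring

include hrpos hranti in
theorem ell_strictMono (hrsmall : ∀ t, 0 < t → ∃ j, r j < t) : StrictMono (ell r) := by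
  intro s t hst
  rcases le_or_gt t 0 with ht | ht
  · rw [ell_nonpos (le_of_lt hst |>.trans ht), ell_nonpos ht]; exact hst
  rcases le_or_gt s 0 with hs | hs
  · rw [ell_nonpos hs]
    exact lt_of_le_of_lt hs (ell_pos hrpos hranti hrsmall ht)
  rcases le_or_gt (r 0) s with h1 | h1
  · rw [ell_ge_top hrpos h1, ell_ge_top hrpos (by linarith)]
    linarith
  rcases le_or_gt (r 0) t with h2 | h2
  · have hstep : ell r s < 1 := by
      have := ell_lt_of_lt hrpos hranti hrsmall hs h1 (le_refl (r 0))
      rwa [ell_one hrpos] at this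
    rw [ell_ge_top hrpos h2]
    linarith
  · exact ell_lt_of_lt hrpos hranti hrsmall hs hst h2.le

include hrpos hranti in
theorem ell_surj (hrsmall : ∀ t, 0 < t → ∃ j, r j < t) : Function.Surjective (ell r) := by
  intro y
  rcases le_or_gt y 0 with hy | hy
  · exact ⟨y, ell_nonpos hy⟩
  rcases le_or_gt 1 y with hy1 | hy1
  · refine ⟨y + r 0 - 1, ?_⟩
    have : r 0 ≤ y + r 0 - 1 := by linarith
    rw [ell_ge_top hrpos this]; ring
  · -- 0 < y < 1 : find m with ee (m+1) < y ≤ ee m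
    have hex : ∃ j, ee j < y := by
      obtain ⟨j, hj⟩ := exists_nat_gt (-Real.log y)
      refine ⟨j, ?_⟩
      have : -(j : ℝ) < Real.log y := by linarith
      calc ee j = Real.exp (-(j:ℝ)) := rfl
        _ < Real.exp (Real.log y) := Real.exp_lt_exp.2 this
        _ = y := Real.exp_log hy
    have hfind := Nat.find_spec hex
    obtain ⟨m, h1, h2⟩ : ∃ m, ee (m + 1) < y ∧ y ≤ ee m := by
      match hm : Nat.find hex with
      | 0 =>
        rw [hm] at hfind
        rw [ee_zero] at hfind
        exact absurd hfind (not_lt.mpr hy1.le)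
      | m + 1 =>
        rw [hm] at hfind
        refine ⟨m, hfind, ?_⟩
        have := Nat.find_min hex (m := m) (by omega)
        linarith [not_lt.mp this]
    set k := (ee m - ee (m + 1)) / (r m - r (m + 1)) with hk
    have hkpos : 0 < k := pc_slope_pos hranti m
    set t := r (m + 1) + (y - ee (m + 1)) / k with htdef
    clear_value t k
    have ht1 : r (m + 1) < t := by
      have : 0 < (y - ee (m + 1)) / k := div_pos (by linarith) hkpos
      linarith
    have ht2 : t ≤ r m := by
      have hden : 0 < r m - r (m + 1) := by linarith [hranti m]
      have hkval : k * (r m - r (m + 1)) = ee m - ee (m + 1) := by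
        rw [hk]; field_simp
      have : (y - ee (m + 1)) / k ≤ r m - r (m + 1) := by
        rw [div_le_iff₀ hkpos]
        nlinarith
      linarith
    refine ⟨t, ?_⟩
    rw [ell_eq_piece hrpos hranti ht1 ht2]
    unfold pc
    rw [← hk, htdef]
    field_simp
    ring

include hrpos hranti in
theorem ell_r_val : ∀ i, ell r (r i) = ee i := by
  intro i
  match i with
  | 0 => rw [ell_one hrpos, ee_zero]
  | i + 1 =>
    rw [ell_eq_piece hrpos hranti (hranti (i + 1)) (le_refl _), pc_top hranti]

end ell

theorem aux_scaling (S : Set ℝ) (r0 : ℝ) (hr0S : r0 ∈ S) (hpos : ∀ s ∈ S, 0 < s)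
    (hub : ∀ s ∈ S, s ≤ r0) (hfin : ∀ ε, 0 < ε → (S ∩ Set.Ici ε).Finite) :
    ∃ ℓ : ℝ → ℝ, ContinuousOn ℓ (Set.Ici 0) ∧ Set.BijOn ℓ (Set.Ici 0) (Set.Ici 0) ∧
      StrictMonoOn ℓ (Set.Ici 0) ∧ ℓ 0 = 0 ∧
      (∀ s ∈ S, ∃ i : ℕ, ℓ s = Real.exp (-(i : ℝ))) ∧ ℓ r0 = 1 := by
  set r := rseq S r0 with hr
  have hrpos : ∀ i, 0 < r i := fun i => (rseq_pos_anti hpos hfin hr0S i).1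
  have hranti : ∀ i, r (i + 1) < r i := fun i => (rseq_pos_anti hpos hfin hr0S i).2
  have hrsmall : ∀ t, 0 < t → ∃ j, r j < t := rseq_small hpos hfin hr0S
  have hsm : StrictMono (ell r) := ell_strictMono hrpos hranti hrsmall
  have hsurj : Function.Surjective (ell r) := ell_surj hrpos hranti hrsmall
  have hmono : Monotone (ell r) := hsm.monotone
  have hzero : ell r 0 = 0 := ell_nonpos (le_refl 0)
  refine ⟨ell r, ?_, ?_, hsm.strictMonoOn _, hzero, ?_, ?_⟩
  · exact (Monotone.continuous_of_surjective hmono hsurj).continuousOn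
  · refine ⟨?_, hsm.injective.injOn, ?_⟩
    · intro t ht
      rcases eq_or_lt_of_le (Set.mem_Ici.mp ht) with h | h
      · rw [← h, hzero]; exact Set.self_mem_Ici
      · exact (ell_pos hrpos hranti hrsmall h).le
    · intro y hy
      obtain ⟨t, ht⟩ := hsurj y
      refine ⟨t, ?_, ht⟩
      by_contra htneg
      rw [Set.mem_Ici, not_le] at htneg
      have : ell r t = t := ell_nonpos htneg.le
      rw [ht] at this
      exact absurd (Set.mem_Ici.mp hy) (by linarith)
  · intro s hs
    obtain ⟨i, hi⟩ := rseq_mem_of_mem hpos hfin hr0S hub s hs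
    exact ⟨i, by rw [← hi, ell_r_val hrpos hranti i]; rfl⟩
  · have : r 0 = r0 := rfl
    rw [← this, ell_one hrpos]

open Topology

/-- If `(X,d)` is a compact ultrametric space with at least two points, then there is a
homeomorphism `ℓ` of `[0,∞)` onto itself (equivalently, a continuous strictly increasing
bijection of `[0,∞)` onto itself) such that `d' = ℓ ∘ d` is an ultrametric on `X`
inducing the same topology as `d`, every nonzero value of `d'` is of the form `e^{-i}`
for a natural number `i`, and the value `1 = e^0` is attained by `d'`. -/
theorem exists_scaling_to_standard_distance_set {X : Type*} [MetricSpace X]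
    [CompactSpace X]
    (ultra : ∀ x y z : X, dist x y ≤ max (dist x z) (dist z y))
    (x₀ y₀ : X) (hxy : x₀ ≠ y₀) :
    ∃ ℓ : ℝ → ℝ, ContinuousOn ℓ (Set.Ici 0) ∧ Set.BijOn ℓ (Set.Ici 0) (Set.Ici 0) ∧
      StrictMonoOn ℓ (Set.Ici 0) ∧
      (∀ a b c : X, ℓ (dist a b) ≤ max (ℓ (dist a c)) (ℓ (dist c b))) ∧
      (∀ a b : X, ℓ (dist a b) = 0 ↔ a = b) ∧
      (∀ (x : X) (ε : ℝ), 0 < ε → ∃ δ > 0, ∀ y : X, ℓ (dist x y) < δ → dist x y < ε) ∧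
      (∀ (x : X) (ε : ℝ), 0 < ε → ∃ δ > 0, ∀ y : X, dist x y < δ → ℓ (dist x y) < ε) ∧
      (∀ a b : X, a ≠ b → ∃ i : ℕ, ℓ (dist a b) = Real.exp (-(i : ℝ))) ∧
      (∃ a b : X, ℓ (dist a b) = 1) := by
  classical
  have : Nonempty (X × X) := ⟨(x₀, y₀)⟩
  -- the isosceles property
  have iso : ∀ x y z : X, dist y z < dist x y → dist x z = dist x y := by
    intro x y z h
    apply le_antisymm
    · have h1 : dist x z ≤ max (dist x y) (dist y z) := ultra x z y
      rwa [max_eq_left h.le] at h1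
    · rcases le_max_iff.1 (ultra x y z) with h' | h'
      · exact h'
      · rw [dist_comm z y] at h'
        linarith
  -- the set of positive distances
  set S : Set ℝ := {s : ℝ | 0 < s ∧ ∃ a b : X, dist a b = s} with hS
  have hpos : ∀ s ∈ S, 0 < s := fun s hs => hs.1
  -- the maximum distance
  obtain ⟨⟨a₀, b₀⟩, -, hmax⟩ :=
    isCompact_univ.exists_isMaxOn (s := (Set.univ : Set (X × X)))
      Set.univ_nonempty (continuous_dist.continuousOn)
  rw [isMaxOn_iff] at hmax
  have hr0pos : 0 < dist a₀ b₀ :=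
    lt_of_lt_of_le (dist_pos.mpr hxy) (hmax (x₀, y₀) trivial)
  have hr0S : dist a₀ b₀ ∈ S := ⟨hr0pos, a₀, b₀, rfl⟩
  have hub : ∀ s ∈ S, s ≤ dist a₀ b₀ := by
    rintro s ⟨-, x, y, rfl⟩
    exact hmax (x, y) trivial
  -- finiteness of distances above ε
  have hfin : ∀ ε, 0 < ε → (S ∩ Set.Ici ε).Finite := by
    intro ε hε
    set K : Set (X × X) := {p | ε ≤ dist p.1 p.2} with hK
    have hKc : IsCompact K := (isClosed_le continuous_const continuous_dist).isCompact
    set U : X × X → Set (X × X) :=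
      fun p => Metric.ball p.1 (ε / 2) ×ˢ Metric.ball p.2 (ε / 2) with hU
    have hUnhds : ∀ p ∈ K, U p ∈ 𝓝 p := by
      intro p _
      exact prod_mem_nhds (Metric.ball_mem_nhds _ (half_pos hε))
        (Metric.ball_mem_nhds _ (half_pos hε))
    obtain ⟨F, hFK, hFcov⟩ := hKc.elim_nhds_subcover U hUnhds
    apply ((F.finite_toSet.image (fun p : X × X => dist p.1 p.2))).subset
    rintro s ⟨⟨hspos, x, y, rfl⟩, hsε⟩
    have hxyK : (x, y) ∈ K := hsε
    obtain ⟨p, hpF, hpU⟩ := Set.mem_iUnion₂.mp (hFcov hxyK)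
    obtain ⟨hx, hy⟩ := hpU
    have hpK : p ∈ K := hFK p hpF
    simp only [Metric.mem_ball] at hx hy
    have hpd : ε ≤ dist p.1 p.2 := hpK
    -- dist x y = dist p.1 p.2
    have e1 : dist p.2 x = dist p.2 p.1 := by
      apply iso
      rw [dist_comm p.1 x]
      calc dist x p.1 < ε / 2 := hx
        _ ≤ dist p.1 p.2 := by linarith
        _ = dist p.2 p.1 := dist_comm _ _
    have e2 : dist x y = dist x p.2 := by
      apply iso
      rw [dist_comm p.2 y]
      calc dist y p.2 < ε / 2 := hy
        _ ≤ dist p.2 p.1 := by rw [dist_comm]; linarith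
        _ = dist x p.2 := by rw [dist_comm x p.2, e1]
    refine ⟨p, hpF, ?_⟩
    show dist p.1 p.2 = dist x y
    rw [e2, dist_comm x p.2, e1, dist_comm p.2 p.1]
  -- apply the abstract construction
  obtain ⟨ℓ, hcont, hbij, hsm, hzero, hvals, hone⟩ :=
    aux_scaling S (dist a₀ b₀) hr0S hpos hub hfin
  have hmono : MonotoneOn ℓ (Set.Ici 0) := hsm.monotoneOn
  refine ⟨ℓ, hcont, hbij, hsm, ?_, ?_, ?_, ?_, ?_, ⟨a₀, b₀, hone⟩⟩
  · -- ultrametric inequality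
    intro a b c
    rcases le_total (dist a c) (dist c b) with h | h
    · refine le_max_iff.2 (Or.inr ?_)
      apply hmono dist_nonneg dist_nonneg
      calc dist a b ≤ max (dist a c) (dist c b) := ultra a b c
        _ = dist c b := max_eq_right h
    · refine le_max_iff.2 (Or.inl ?_)
      apply hmono dist_nonneg dist_nonneg
      calc dist a b ≤ max (dist a c) (dist c b) := ultra a b c
        _ = dist a c := max_eq_left h
  · -- zero iff
    intro a b
    constructor
    · intro h
      have : dist a b = 0 := by
        apply hsm.injOn dist_nonneg (Set.self_mem_Ici)
        rw [h, hzero]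
      exact dist_eq_zero.mp this
    · intro h
      subst h
      rw [dist_self, hzero]
  · -- ℓ ∘ d controls d
    intro x ε hε
    refine ⟨ℓ ε, by rw [← hzero]; exact hsm Set.self_mem_Ici hε.le hε, ?_⟩
    intro y hy
    by_contra hc
    push_neg at hc
    exact absurd hy (not_lt.mpr (hmono hε.le dist_nonneg hc))
  · -- d controls ℓ ∘ d
    intro x ε hε
    obtain ⟨t, ht0, hteq⟩ := hbij.2.2 (Set.mem_Ici.mpr (half_pos hε).le)
    have htpos : 0 < t := by
      rcases eq_or_lt_of_le (Set.mem_Ici.mp ht0) with h | h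
      · exfalso
        rw [← h, hzero] at hteq
        linarith
      · exact h
    refine ⟨t, htpos, fun y hy => ?_⟩
    calc ℓ (dist x y) < ℓ t := hsm dist_nonneg ht0 hy
      _ = ε / 2 := hteq
      _ < ε := by linarith
  · -- values in {e^{-i}}
    intro a b hab
    exact hvals (dist a b) ⟨dist_pos.mpr hab, a, b, rfl⟩
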